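/- arXiv:2503.11150 — 4 statements merged into one kernel-verified Lean document; each statement's English description precedes it below -/
import Mathlib

section
/- Let G be a finite directed graph with vertex weights α : V → ℝ and transition times τ : V → ℤ_{>0}. Then for every t ≥ 2, the maximum of the relative weight W(c) over simple cycles c in G is at most the supremum of W(i) over all paths i of length t in G. -/
open Finset

private lemma sum_shift_one {T : ℕ} (hT : 0 < T) (h : ℕ → ℝ) :
    ∑ r ∈ Finset.range T, h ((r + 1) % T) = ∑ r ∈ Finset.range T, h r := by
  obtain ⟨n, rfl⟩ := Nat.exists_eq_succ_of_ne_zero hT.ne'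
  rw [Finset.sum_range_succ, Finset.sum_range_succ']
  congr 1
  · refine Finset.sum_congr rfl fun r hr => ?_
    have : r < n := Finset.mem_range.mp hr
    rw [Nat.mod_eq_of_lt (by omega)]
  · simp

private lemma sum_shift {T : ℕ} (hT : 0 < T) (s : ℕ) (h : ℕ → ℝ) :
    ∑ r ∈ Finset.range T, h ((r + s) % T) = ∑ r ∈ Finset.range T, h r := by
  induction s with
  | zero =>
      refine Finset.sum_congr rfl fun r hr => ?_
      rw [Nat.add_zero, Nat.mod_eq_of_lt (Finset.mem_range.mp hr)]
  | succ n ih =>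
      have step : ∑ r ∈ Finset.range T, h ((r + (n + 1)) % T)
          = ∑ r ∈ Finset.range T, h (((r + 1) % T + n) % T) := by
        refine Finset.sum_congr rfl fun r _ => ?_
        rw [Nat.mod_add_mod]
        have hx : r + 1 + n = r + (n + 1) := by omega
        rw [hx]
      rw [step, sum_shift_one hT (fun k => h ((k + n) % T)), ih]

/-- For every `t ≥ 2`, the relative weight of any simple cycle is at most the supremum of
relative weights over all paths of length `t` (i.e. with `t` vertices) in the graph. -/
theorem simple_cycle_weight_le_sup_path_weight
    {V : Type*} [Fintype V]
    (E : V → V → Prop) (α : V → ℝ) (τ : V → ℕ) (hτ : ∀ v, 0 < τ v)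
    (t : ℕ) (ht : 2 ≤ t)
    (T : ℕ) (hT : 0 < T) (c : ℕ → V)
    (hinj : ∀ s < T, ∀ s' < T, c s = c s' → s = s')
    (hcyc : ∀ s < T, E (c s) (c ((s + 1) % T))) :
    (∑ s ∈ Finset.range T, α (c s)) / (∑ s ∈ Finset.range T, (τ (c s) : ℝ)) ≤
      ⨆ i : {i : ℕ → V // ∀ s, s + 2 ≤ t → E (i s) (i (s + 1))},
        (∑ s ∈ Finset.range t, α (i.1 s)) /
          (∑ s ∈ Finset.range t, (τ (i.1 s) : ℝ)) := by
  classical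
  set A := ∑ s ∈ Finset.range T, α (c s) with hA
  set B := ∑ s ∈ Finset.range T, (τ (c s) : ℝ) with hB
  have hBpos : 0 < B := by
    refine Finset.sum_pos (fun s _ => by exact_mod_cast hτ (c s))
      (Finset.nonempty_range_iff.mpr hT.ne')
  -- each window along the cycle is a valid path
  have hpath : ∀ r : ℕ, ∀ s, s + 2 ≤ t → E (c ((r + s) % T)) (c ((r + (s + 1)) % T)) := by
    intro r s _
    have hk : (r + s) % T < T := Nat.mod_lt _ hT
    have h2 : (r + (s + 1)) % T = ((r + s) % T + 1) % T := by
      rw [Nat.mod_add_mod, ← Nat.add_assoc]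
    rw [h2]
    exact hcyc _ hk
  -- window sums
  set f : ℕ → ℝ := fun r => ∑ s ∈ Finset.range t, α (c ((r + s) % T)) with hf
  set g : ℕ → ℝ := fun r => ∑ s ∈ Finset.range t, (τ (c ((r + s) % T)) : ℝ) with hg
  have hgpos : ∀ r, 0 < g r := fun r =>
    Finset.sum_pos (fun s _ => by exact_mod_cast hτ _)
      (Finset.nonempty_range_iff.mpr (by omega))
  have hfsum : ∑ r ∈ Finset.range T, f r = t * A := by
    rw [hf]
    rw [Finset.sum_comm]
    rw [Finset.sum_congr rfl fun s _ =>
      sum_shift hT s (fun k => α (c k))]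
    simp [mul_comm, hA]
  have hgsum : ∑ r ∈ Finset.range T, g r = t * B := by
    rw [hg]
    rw [Finset.sum_comm]
    rw [Finset.sum_congr rfl fun s _ =>
      sum_shift hT s (fun k => (τ (c k) : ℝ))]
    simp [mul_comm, hB]
  -- some window has weight at least the cycle weight
  have hex : ∃ r, A * g r ≤ f r * B := by
    by_contra hcon
    push_neg at hcon
    have hlt : ∑ r ∈ Finset.range T, f r * B < ∑ r ∈ Finset.range T, A * g r :=
      Finset.sum_lt_sum_of_nonempty (Finset.nonempty_range_iff.mpr hT.ne')
        (fun r _ => hcon r)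
    rw [← Finset.sum_mul, ← Finset.mul_sum, hfsum, hgsum] at hlt
    ring_nf at hlt
    exact lt_irrefl _ hlt
  obtain ⟨r, hr⟩ := hex
  -- boundedness of the set of path weights
  have hbdd : BddAbove (Set.range fun i : {i : ℕ → V // ∀ s, s + 2 ≤ t → E (i s) (i (s + 1))} =>
      (∑ s ∈ Finset.range t, α (i.1 s)) / (∑ s ∈ Finset.range t, (τ (i.1 s) : ℝ))) := by
    apply Set.Finite.bddAbove
    have hsub : (Set.range fun i : {i : ℕ → V // ∀ s, s + 2 ≤ t → E (i s) (i (s + 1))} =>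
        (∑ s ∈ Finset.range t, α (i.1 s)) / (∑ s ∈ Finset.range t, (τ (i.1 s) : ℝ))) ⊆
        (fun p : Fin t → V => (∑ s : Fin t, α (p s)) / (∑ s : Fin t, (τ (p s) : ℝ))) ''
          Set.univ := by
      rintro x ⟨i, rfl⟩
      refine ⟨fun s => i.1 s.val, trivial, ?_⟩
      simp only []
      rw [Fin.sum_univ_eq_sum_range (fun k => α (i.1 k)) t,
        Fin.sum_univ_eq_sum_range (fun k => (τ (i.1 k) : ℝ)) t]
    exact Set.Finite.subset (Set.finite_univ.image _) hsub
  -- conclude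
  have hle : A / B ≤ f r / g r := by
    rw [div_le_div_iff₀ hBpos (hgpos r)]
    exact hr
  refine hle.trans ?_
  exact le_ciSup hbdd ⟨fun s => c ((r + s) % T), hpath r⟩
end

section
/- Let G be a finite directed graph, S a subgroup of the automorphism group of G, and α : V → ℝ, τ : V → ℤ_{>0} functions invariant under S (α(Si) = α(i), τ(Si) = τ(i) for all S ∈ S, i ∈ V). Then α and τ descend to well-defined functions on the quotient graph G/S, and the maximum relative weight over simple cycles in G equals the maximum relative weight over simple cycles in G/S. -/
open Finset

/-- The set of relative weights of simple cycles. -/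
def mcwq.cycSet {V : Type*} (E : V → V → Prop) (α : V → ℝ) (τ : V → ℕ) : Set ℝ :=
  {w : ℝ | ∃ (T : ℕ) (c : ℕ → V), 0 < T ∧
      (∀ s < T, ∀ s' < T, c s = c s' → s = s') ∧
      (∀ s < T, E (c s) (c ((s + 1) % T))) ∧
      w = (∑ s ∈ Finset.range T, α (c s)) /
        (∑ s ∈ Finset.range T, (τ (c s) : ℝ))}

/-- The set of relative weights of closed walks. -/
def mcwq.walkSet {V : Type*} (E : V → V → Prop) (α : V → ℝ) (τ : V → ℕ) : Set ℝ :=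
  {w : ℝ | ∃ (T : ℕ) (c : ℕ → V), 0 < T ∧
      (∀ s < T, E (c s) (c ((s + 1) % T))) ∧
      w = (∑ s ∈ Finset.range T, α (c s)) /
        (∑ s ∈ Finset.range T, (τ (c s) : ℝ))}

namespace mcwq

lemma tausum_pos {V : Type*} (τ : V → ℕ) (hτ : ∀ v, 0 < τ v) (T : ℕ) (hT : 0 < T)
    (c : ℕ → V) : (0:ℝ) < ∑ s ∈ range T, (τ (c s) : ℝ) :=
  Finset.sum_pos (fun i _ => by exact_mod_cast hτ (c i)) (nonempty_range_iff.mpr hT.ne')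

lemma mediant_le_max (A1 A2 B1 B2 : ℝ) (h1 : 0 < B1) (h2 : 0 < B2) :
    (A1 + A2) / (B1 + B2) ≤ max (A1 / B1) (A2 / B2) := by
  set M := max (A1 / B1) (A2 / B2) with hM
  have k1 : A1 ≤ M * B1 := (div_le_iff₀ h1).mp (le_max_left _ _)
  have k2 : A2 ≤ M * B2 := (div_le_iff₀ h2).mp (le_max_right _ _)
  rw [div_le_iff₀ (by linarith)]
  nlinarith

lemma sum_mod (f : ℕ → ℝ) (T m : ℕ) :
    ∑ u ∈ range (m * T), f (u % T) = (m : ℝ) * ∑ u ∈ range T, f u := by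
  induction m with
  | zero => simp
  | succ m ih =>
    rw [Nat.succ_mul, Finset.sum_range_add, ih]
    have h : ∑ u ∈ range T, f ((m * T + u) % T) = ∑ u ∈ range T, f u :=
      Finset.sum_congr rfl fun u hu => by
        rw [Nat.mul_add_mod', Nat.mod_eq_of_lt (mem_range.mp hu)]
    rw [h]
    push_cast
    ring

lemma walk_le {V : Type*} (α : V → ℝ) (τ : V → ℕ) (hτ : ∀ v, 0 < τ v) (M : ℝ)
    (hM : ∀ v, α v ≤ M) (h0 : 0 ≤ M) (T : ℕ) (c : ℕ → V) (hT : 0 < T) :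
    (∑ s ∈ range T, α (c s)) / (∑ s ∈ range T, (τ (c s) : ℝ)) ≤ M := by
  have hB : (T : ℝ) ≤ ∑ s ∈ range T, (τ (c s) : ℝ) := by
    calc (T : ℝ) = ∑ _s ∈ range T, (1:ℝ) := by simp
    _ ≤ _ := Finset.sum_le_sum fun i _ => by exact_mod_cast hτ (c i)
  have hBpos : (0:ℝ) < ∑ s ∈ range T, (τ (c s) : ℝ) :=
    lt_of_lt_of_le (by exact_mod_cast hT) hB
  rw [div_le_iff₀ hBpos]
  calc ∑ s ∈ range T, α (c s) ≤ ∑ _s ∈ range T, M := Finset.sum_le_sum fun i _ => hM _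
  _ = M * T := by simp [mul_comm]
  _ ≤ M * ∑ s ∈ range T, (τ (c s) : ℝ) := mul_le_mul_of_nonneg_left hB h0

lemma exists_cycle_ge {V : Type*} (E : V → V → Prop) (α : V → ℝ) (τ : V → ℕ)
    (hτ : ∀ v, 0 < τ v) :
    ∀ T : ℕ, ∀ c : ℕ → V, 0 < T → (∀ s < T, E (c s) (c ((s + 1) % T))) →
    ∃ w' ∈ cycSet E α τ,
      (∑ s ∈ range T, α (c s)) / (∑ s ∈ range T, (τ (c s) : ℝ)) ≤ w' := by
  intro T
  induction T using Nat.strong_induction_on with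
  | _ T ih =>
    intro c hT hwalk
    by_cases hinj : ∀ s < T, ∀ s' < T, c s = c s' → s = s'
    · exact ⟨_, ⟨T, c, hT, hinj, hwalk, rfl⟩, le_refl _⟩
    · push_neg at hinj
      obtain ⟨s, hs, s', hs', heq, hne⟩ := hinj
      obtain ⟨a, b, hab, hbT, hcab⟩ : ∃ a b, a < b ∧ b < T ∧ c a = c b := by
        rcases hne.lt_or_gt with h | h
        · exact ⟨s, s', h, hs', heq⟩
        · exact ⟨s', s, h, hs, heq.symm⟩
      set L1 := b - a with hL1
      set L2 := T - L1 with hL2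
      have haT : a < T := hab.trans hbT
      have hL1pos : 0 < L1 := by omega
      have hL1T : L1 < T := by omega
      have hL2pos : 0 < L2 := by omega
      have hL2T : L2 < T := by omega
      have haL2 : a < L2 := by omega
      set c1 : ℕ → V := fun u => c (a + u) with hc1
      set c2 : ℕ → V := fun u => if u < a then c u else c (u + L1) with hc2
      have hw1 : ∀ u < L1, E (c1 u) (c1 ((u + 1) % L1)) := by
        intro u hu
        rcases eq_or_lt_of_le (Nat.succ_le_of_lt hu) with h | h
        · have h : u + 1 = L1 := h
          have hmod : (u + 1) % L1 = 0 := by rw [h, Nat.mod_self]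
          rw [hmod]
          have h10 : c1 0 = c b := by simp only [hc1, Nat.add_zero]; rw [hcab]
          rw [h10]
          have hw := hwalk (a + u) (by omega)
          rwa [Nat.mod_eq_of_lt (by omega), show a + u + 1 = b by omega] at hw
        · rw [Nat.mod_eq_of_lt h]
          have hw := hwalk (a + u) (by omega)
          rwa [Nat.mod_eq_of_lt (by omega), show a + u + 1 = a + (u + 1) by omega] at hw
      have hw2 : ∀ u < L2, E (c2 u) (c2 ((u + 1) % L2)) := by
        intro u hu
        rcases eq_or_lt_of_le (Nat.succ_le_of_lt hu) with h | h
        · have h : u + 1 = L2 := h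
          have hau : a ≤ u := by omega
          have hmod : (u + 1) % L2 = 0 := by rw [h]; exact Nat.mod_self _
          rw [hmod]
          have h1 : c2 u = c (T - 1) := by
            simp only [hc2, if_neg (by omega : ¬ u < a)]
            congr 1; omega
          have h2 : c2 0 = c 0 := by
            by_cases ha0 : 0 < a
            · simp only [hc2, if_pos ha0]
            · have ha0' : a = 0 := by omega
              simp only [hc2, if_neg (by omega : ¬ (0:ℕ) < a)]
              rw [show 0 + L1 = b by omega, ← hcab, ha0']
          rw [h1, h2]
          have hw := hwalk (T - 1) (by omega)
          rwa [show (T - 1 + 1) % T = 0 by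
            rw [Nat.sub_add_cancel hT, Nat.mod_self]] at hw
        · rw [Nat.mod_eq_of_lt h]
          by_cases hua : u + 1 < a
          · simp only [hc2, if_pos (by omega : u < a), if_pos hua]
            have hw := hwalk u (by omega)
            rwa [Nat.mod_eq_of_lt (by omega)] at hw
          · by_cases hua2 : u + 1 = a
            · simp only [hc2, if_pos (by omega : u < a), if_neg hua]
              rw [show u + 1 + L1 = b by omega, ← hcab, ← hua2]
              have hw := hwalk u (by omega)
              rwa [Nat.mod_eq_of_lt (by omega)] at hw
            · have hau : a ≤ u := by omega
              simp only [hc2, if_neg (by omega : ¬ u < a), if_neg hua]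
              have hw := hwalk (u + L1) (by omega)
              rwa [Nat.mod_eq_of_lt (by omega),
                show u + L1 + 1 = u + 1 + L1 by omega] at hw
      have hsplit : ∀ f : V → ℝ, ∑ u ∈ range T, f (c u) =
          (∑ u ∈ range L1, f (c1 u)) + ∑ u ∈ range L2, f (c2 u) := by
        intro f
        have e1 : ∑ u ∈ range L1, f (c1 u) = ∑ u ∈ Ico a b, f (c u) :=
          (Finset.sum_Ico_eq_sum_range (fun k => f (c k)) a b).symm
        have e2a : (∑ u ∈ range a, f (c2 u)) + ∑ u ∈ Ico a L2, f (c2 u)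
            = ∑ u ∈ range L2, f (c2 u) :=
          Finset.sum_range_add_sum_Ico _ haL2.le
        have e2b : ∑ u ∈ range a, f (c2 u) = ∑ u ∈ range a, f (c u) :=
          Finset.sum_congr rfl fun u hu => by
            simp only [hc2, if_pos (mem_range.mp hu)]
        have e2c : ∑ u ∈ Ico a L2, f (c2 u) = ∑ u ∈ Ico b T, f (c u) := by
          rw [Finset.sum_Ico_eq_sum_range, Finset.sum_Ico_eq_sum_range,
            show L2 - a = T - b by rw [hL2, hL1]; omega]
          refine Finset.sum_congr rfl fun u _ => ?_
          simp only [hc2, if_neg (by omega : ¬ a + u < a)]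
          rw [show a + u + L1 = b + u by omega]
        have etot : (∑ u ∈ range a, f (c u)) +
            ((∑ u ∈ Ico a b, f (c u)) + ∑ u ∈ Ico b T, f (c u))
            = ∑ u ∈ range T, f (c u) := by
          rw [Finset.sum_Ico_consecutive _ hab.le hbT.le]
          exact Finset.sum_range_add_sum_Ico _ (by omega)
        rw [e1, ← e2a, e2b, e2c]
        linarith
      have hB1 : (0:ℝ) < ∑ u ∈ range L1, (τ (c1 u) : ℝ) := tausum_pos τ hτ L1 hL1pos c1
      have hB2 : (0:ℝ) < ∑ u ∈ range L2, (τ (c2 u) : ℝ) := tausum_pos τ hτ L2 hL2pos c2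
      obtain ⟨w1, hw1mem, hw1le⟩ := ih L1 hL1T c1 hL1pos hw1
      obtain ⟨w2, hw2mem, hw2le⟩ := ih L2 hL2T c2 hL2pos hw2
      have hmed := mediant_le_max (∑ u ∈ range L1, α (c1 u)) (∑ u ∈ range L2, α (c2 u))
        (∑ u ∈ range L1, (τ (c1 u) : ℝ)) (∑ u ∈ range L2, (τ (c2 u) : ℝ)) hB1 hB2
      rw [hsplit α, hsplit (fun v => (τ v : ℝ))]
      rcases le_total ((∑ u ∈ range L1, α (c1 u)) / (∑ u ∈ range L1, (τ (c1 u) : ℝ)))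
        ((∑ u ∈ range L2, α (c2 u)) / (∑ u ∈ range L2, (τ (c2 u) : ℝ))) with hmx | hmx
      · exact ⟨w2, hw2mem, le_trans (hmed.trans (by rw [max_eq_right hmx])) hw2le⟩
      · exact ⟨w1, hw1mem, le_trans (hmed.trans (by rw [max_eq_left hmx])) hw1le⟩

lemma sSup_cyc_eq_walk {V : Type*} (E : V → V → Prop) (α : V → ℝ) (τ : V → ℕ)
    (hτ : ∀ v, 0 < τ v) (M : ℝ) (hM : ∀ v, α v ≤ M) (h0 : 0 ≤ M) :
    sSup (cycSet E α τ) = sSup (walkSet E α τ) := by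
  have hsub : cycSet E α τ ⊆ walkSet E α τ := by
    rintro w ⟨T, c, hT, _, hw, he⟩
    exact ⟨T, c, hT, hw, he⟩
  have hbdd : BddAbove (walkSet E α τ) := by
    refine ⟨M, ?_⟩
    rintro w ⟨T, c, hT, hw, he⟩
    exact he ▸ walk_le α τ hτ M hM h0 T c hT
  by_cases hne : (walkSet E α τ).Nonempty
  · obtain ⟨w0, T0, c0, hT0, hw0, he0⟩ := hne
    obtain ⟨w', hw'mem, _⟩ := exists_cycle_ge E α τ hτ T0 c0 hT0 hw0
    apply le_antisymm
    · exact csSup_le_csSup hbdd ⟨w', hw'mem⟩ hsub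
    · refine csSup_le ⟨w0, T0, c0, hT0, hw0, he0⟩ fun w hw => ?_
      obtain ⟨T, c, hT, hwk, he⟩ := hw
      obtain ⟨w'', hm, hle⟩ := exists_cycle_ge E α τ hτ T c hT hwk
      exact he ▸ hle.trans (le_csSup (hbdd.mono hsub) hm)
  · have hwe : walkSet E α τ = ∅ := Set.not_nonempty_iff_eq_empty.mp hne
    have hce : cycSet E α τ = ∅ := Set.eq_empty_of_subset_empty (hwe ▸ hsub)
    rw [hwe, hce]

end mcwq

/-- Symmetry reduction: if a subgroup `S` of graph automorphisms leaves the weights `α` and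
transition times `τ` invariant, then `α` and `τ` descend to the quotient graph and the maximum
relative weight over simple cycles in `G` equals the maximum relative weight over simple
cycles in the quotient graph `G/S`. -/
theorem max_cycle_weight_quotient
    {V : Type*} [Fintype V] (E : V → V → Prop)
    (S : Subgroup (Equiv.Perm V))
    (hSE : ∀ g ∈ S, ∀ i j : V, E i j → E (g i) (g j))
    (α : V → ℝ) (τ : V → ℕ) (hτ : ∀ v, 0 < τ v)
    (hαS : ∀ g ∈ S, ∀ i : V, α (g i) = α i)
    (hτS : ∀ g ∈ S, ∀ i : V, τ (g i) = τ i)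
    (r : V → V → Prop) (hr : ∀ i j : V, r i j ↔ ∃ g ∈ S, g i = j)
    (E' : Quot r → Quot r → Prop)
    (hE' : ∀ x y : Quot r, E' x y ↔
      ∃ i j : V, Quot.mk r i = x ∧ Quot.mk r j = y ∧ E i j) :
    ∃ (α' : Quot r → ℝ) (τ' : Quot r → ℕ),
      (∀ v : V, α' (Quot.mk r v) = α v) ∧
      (∀ v : V, τ' (Quot.mk r v) = τ v) ∧
      sSup {w : ℝ | ∃ (T : ℕ) (c : ℕ → V), 0 < T ∧
          (∀ s < T, ∀ s' < T, c s = c s' → s = s') ∧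
          (∀ s < T, E (c s) (c ((s + 1) % T))) ∧
          w = (∑ s ∈ Finset.range T, α (c s)) /
            (∑ s ∈ Finset.range T, (τ (c s) : ℝ))} =
      sSup {w : ℝ | ∃ (T : ℕ) (c : ℕ → Quot r), 0 < T ∧
          (∀ s < T, ∀ s' < T, c s = c s' → s = s') ∧
          (∀ s < T, E' (c s) (c ((s + 1) % T))) ∧
          w = (∑ s ∈ Finset.range T, α' (c s)) /
            (∑ s ∈ Finset.range T, (τ' (c s) : ℝ))} := by
  classical
  -- `r` is an equivalence relation
  have hrefl : ∀ x, r x x := fun x => (hr x x).mpr ⟨1, S.one_mem, rfl⟩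
  have hsymm : ∀ x y, r x y → r y x := by
    intro x y h
    obtain ⟨g, hg, hgx⟩ := (hr x y).mp h
    exact (hr y x).mpr ⟨g⁻¹, S.inv_mem hg, by rw [← hgx]; simp⟩
  have htrans : ∀ x y z, r x y → r y z → r x z := by
    intro x y z h1 h2
    obtain ⟨g1, hg1, hgx1⟩ := (hr x y).mp h1
    obtain ⟨g2, hg2, hgx2⟩ := (hr y z).mp h2
    exact (hr x z).mpr ⟨g2 * g1, S.mul_mem hg2 hg1, by
      rw [Equiv.Perm.mul_apply, hgx1, hgx2]⟩
  have heqv : ∀ x y, Relation.EqvGen r x y → r x y := by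
    intro x y h
    induction h with
    | rel _ _ h => exact h
    | refl _ => exact hrefl _
    | symm _ _ _ ih => exact hsymm _ _ ih
    | trans _ _ _ _ _ ih1 ih2 => exact htrans _ _ _ ih1 ih2
  have hexact : ∀ x y, Quot.mk r x = Quot.mk r y → r x y := fun x y h =>
    heqv x y (Quot.eqvGen_exact h)
  have hαlift : ∀ x y, r x y → α x = α y := by
    intro x y h
    obtain ⟨g, hg, hgx⟩ := (hr x y).mp h
    rw [← hgx]; exact (hαS g hg x).symm
  have hτlift : ∀ x y, r x y → τ x = τ y := by
    intro x y h
    obtain ⟨g, hg, hgx⟩ := (hr x y).mp h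
    rw [← hgx]; exact (hτS g hg x).symm
  refine ⟨Quot.lift α hαlift, Quot.lift τ hτlift, fun v => rfl, fun v => rfl, ?_⟩
  show sSup (mcwq.cycSet E α τ) =
    sSup (mcwq.cycSet E' (Quot.lift α hαlift) (Quot.lift τ hτlift))
  -- bound
  obtain ⟨M0, hM0⟩ := Finset.exists_le (Finset.univ.image α)
  set M := max M0 0 with hMdef
  have hMα : ∀ v, α v ≤ M := fun v =>
    le_trans (hM0 _ (Finset.mem_image_of_mem α (Finset.mem_univ v))) (le_max_left _ _)
  have hM0' : (0:ℝ) ≤ M := le_max_right _ _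
  have hMα' : ∀ x : Quot r, Quot.lift α hαlift x ≤ M := Quot.ind hMα
  have hτ'pos : ∀ x : Quot r, 0 < Quot.lift τ hτlift x := Quot.ind hτ
  rw [mcwq.sSup_cyc_eq_walk E α τ hτ M hMα hM0',
    mcwq.sSup_cyc_eq_walk E' (Quot.lift α hαlift) (Quot.lift τ hτlift) hτ'pos M hMα' hM0']
  congr 1
  apply Set.Subset.antisymm
  · -- projection
    rintro w ⟨T, c, hT, hw, he⟩
    refine ⟨T, fun s => Quot.mk r (c s), hT, ?_, ?_⟩
    · intro s hs
      exact (hE' _ _).mpr ⟨c s, c ((s + 1) % T), rfl, rfl, hw s hs⟩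
    · exact he
  · -- lifting
    rintro w ⟨T, c, hT, hw, he⟩
    have hmodstep : ∀ n : ℕ, (n % T + 1) % T = (n + 1) % T := fun n =>
      (Nat.mod_modEq n T).add_right 1
    have key : ∀ (n : ℕ) (v : V), Quot.mk r v = c (n % T) →
        ∃ u : V, Quot.mk r u = c ((n + 1) % T) ∧ E v u := by
      intro n v hv
      have hE'n : E' (c (n % T)) (c ((n % T + 1) % T)) := hw (n % T) (Nat.mod_lt n hT)
      rw [hmodstep n] at hE'n
      obtain ⟨i, j, hi, hj, hij⟩ := (hE' _ _).mp hE'n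
      have hiv : r i v := hexact i v (hi.trans hv.symm)
      obtain ⟨g, hg, hgi⟩ := (hr i v).mp hiv
      refine ⟨g j, ?_, ?_⟩
      · rw [← hj]
        exact (Quot.sound ((hr j (g j)).mpr ⟨g, hg, rfl⟩)).symm
      · rw [← hgi]; exact hSE g hg i j hij
    obtain ⟨v0, hv0⟩ := (c (0 % T)).exists_rep
    let d : ∀ n : ℕ, {v : V // Quot.mk r v = c (n % T)} := fun n =>
      Nat.rec ⟨v0, hv0⟩
        (fun n p => ⟨(key n p.1 p.2).choose, (key n p.1 p.2).choose_spec.1⟩) n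
    have hdE : ∀ n, E (d n).1 (d (n + 1)).1 := fun n =>
      (key n (d n).1 (d n).2).choose_spec.2
    obtain ⟨k1, k2, hkne, hkeq⟩ := Fintype.exists_ne_map_eq_of_card_lt
      (fun k : Fin (Fintype.card V + 1) => (d (k.1 * T)).1) (by simp)
    obtain ⟨p, q, hpq, hdq⟩ : ∃ p q : ℕ, p < q ∧ (d (p * T)).1 = (d (q * T)).1 := by
      rcases hkne.lt_or_gt with h | h
      · exact ⟨k1.1, k2.1, h, hkeq⟩
      · exact ⟨k2.1, k1.1, h, hkeq.symm⟩
    set m := q - p with hm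
    have hmpos : 0 < m := by omega
    have hle : p * T ≤ q * T := Nat.mul_le_mul_right T hpq.le
    have hpq' : p * T + m * T = q * T := by rw [hm, Nat.sub_mul]; omega
    set L := m * T with hL
    have hLpos : 0 < L := Nat.mul_pos hmpos hT
    refine ⟨L, fun u => (d (p * T + u)).1, hLpos, ?_, ?_⟩
    · intro u hu
      rcases eq_or_lt_of_le (Nat.succ_le_of_lt hu) with h | h
      · have h : u + 1 = L := h
        have hmod : (u + 1) % L = 0 := by rw [h]; exact Nat.mod_self _
        rw [hmod]
        have hE1 := hdE (p * T + u)
        rw [show p * T + u + 1 = q * T by omega] at hE1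
        rw [← hdq] at hE1
        simpa using hE1
      · rw [Nat.mod_eq_of_lt h]
        have hE1 := hdE (p * T + u)
        rwa [show p * T + u + 1 = p * T + (u + 1) by omega] at hE1
    · have hαd : ∀ n, α (d n).1 = Quot.lift α hαlift (c (n % T)) := fun n =>
        congrArg (Quot.lift α hαlift) (d n).2
      have hτd : ∀ n, τ (d n).1 = Quot.lift τ hτlift (c (n % T)) := fun n =>
        congrArg (Quot.lift τ hτlift) (d n).2
      have hAsum : ∑ u ∈ range L, α ((d (p * T + u)).1)
          = (m : ℝ) * ∑ s ∈ range T, Quot.lift α hαlift (c s) := by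
        rw [← mcwq.sum_mod (fun u => Quot.lift α hαlift (c u)) T m]
        exact Finset.sum_congr rfl fun u _ => by
          rw [hαd (p * T + u), Nat.mul_add_mod']
      have hBsum : ∑ u ∈ range L, ((τ ((d (p * T + u)).1) : ℝ))
          = (m : ℝ) * ∑ s ∈ range T, (((Quot.lift τ hτlift (c s) : ℕ)) : ℝ) := by
        rw [← mcwq.sum_mod (fun u => (((Quot.lift τ hτlift (c u) : ℕ)) : ℝ)) T m]
        exact Finset.sum_congr rfl fun u _ => by
          rw [hτd (p * T + u), Nat.mul_add_mod']
      rw [hAsum, hBsum, mul_div_mul_left _ _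
        (by exact_mod_cast hmpos.ne' : (m : ℝ) ≠ 0)]
      exact he
end

section
/- Let L : E → F be a linear map between finite-dimensional inner product spaces with dim E = n, and 1 ≤ m ≤ n. Then the operator norm of the induced map L^∧m : E^∧m → F^∧m on m-th exterior powers (with the induced inner products) equals the product α_1(L)·α_2(L)⋯α_m(L) of the m largest singular values of L. -/
open Matrix Finset

local notation "⟪" x ", " y "⟫" => @inner ℝ _ _ x y

section Aux

variable {m n : ℕ}

/-- weighted Gram matrix built from coefficient matrix `A` and weights `c`. -/
private noncomputable def Gw (A : Matrix (Fin m) (Fin n) ℝ) (c : Fin n → ℝ) :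
    Matrix (Fin m) (Fin m) ℝ :=
  Matrix.of fun i j => ∑ k, c k * (A i k * A j k)

private lemma Gw_det_nonneg (A : Matrix (Fin m) (Fin n) ℝ) {c : Fin n → ℝ}
    (hc : ∀ k, 0 ≤ c k) : 0 ≤ (Gw A c).det := by
  set B : Matrix (Fin m) (Fin n) ℝ := Matrix.of fun i k => A i k * Real.sqrt (c k) with hB
  have hGB : Gw A c = B * Bᴴ := by
    ext i j
    simp only [Gw, Matrix.mul_apply, Matrix.conjTranspose_apply, Matrix.of_apply, hB,
      star_trivial]
    refine Finset.sum_congr rfl fun k _ => ?_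
    linear_combination (A i k * A j k) * (Real.mul_self_sqrt (hc k)).symm
  have hP : (Gw A c).PosSemidef := hGB ▸ Matrix.posSemidef_self_mul_conjTranspose B
  rw [hP.isHermitian.det_eq_prod_eigenvalues]
  exact Finset.prod_nonneg fun i _ => by simpa using hP.eigenvalues_nonneg i

private lemma Gw_det_expand (A : Matrix (Fin m) (Fin n) ℝ) (c : Fin n → ℝ) :
    (Gw A c).det = ∑ f : Fin m → Fin n, (∏ i, c (f i)) *
      ((∏ i, A i (f i)) * (Matrix.of fun i j => A i (f j)).det) := by
  rw [Matrix.det_apply']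
  simp only [Gw, Matrix.of_apply]
  have h1 : ∀ σ : Equiv.Perm (Fin m),
      (∏ i, ∑ k, c k * (A (σ i) k * A i k)) =
        ∑ f : Fin m → Fin n, ∏ i, c (f i) * (A (σ i) (f i) * A i (f i)) := by
    intro σ
    rw [← Fintype.piFinset_univ, Finset.prod_univ_sum]
  simp only [h1, Finset.mul_sum]
  rw [Finset.sum_comm]
  refine Finset.sum_congr rfl fun f _ => ?_
  rw [Matrix.det_apply', Finset.mul_sum, Finset.mul_sum]
  refine Finset.sum_congr rfl fun σ _ => ?_
  simp only [Matrix.of_apply, Finset.prod_mul_distrib]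
  ring

/-- The coefficient attached to a subset `S` in the Cauchy-Binet expansion. -/
private noncomputable def TS (A : Matrix (Fin m) (Fin n) ℝ) (S : Finset (Fin n)) : ℝ :=
  ∑ f ∈ Finset.univ.filter
      (fun f : Fin m → Fin n => Function.Injective f ∧ Finset.image f Finset.univ = S),
    (∏ i, A i (f i)) * (Matrix.of fun i j => A i (f j)).det

private lemma Gw_det_eq_sum (A : Matrix (Fin m) (Fin n) ℝ) (c : Fin n → ℝ) :
    (Gw A c).det = ∑ S ∈ Finset.powersetCard m (Finset.univ : Finset (Fin n)),
      (∏ k ∈ S, c k) * TS A S := by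
  rw [Gw_det_expand]
  have hzero : ∀ f ∈ (Finset.univ : Finset (Fin m → Fin n)),
      (∏ i, c (f i)) * ((∏ i, A i (f i)) * (Matrix.of fun i j => A i (f j)).det) ≠ 0 →
      Function.Injective f := by
    intro f _ hne
    by_contra hinj
    obtain ⟨a, b, hab, hne'⟩ := Function.not_injective_iff.mp hinj
    apply hne
    have : (Matrix.of fun i j => A i (f j)).det = 0 :=
      Matrix.det_zero_of_column_eq hne' (fun k => by simp [hab])
    rw [this]; ring
  rw [← Finset.sum_filter_of_ne hzero]
  have hmaps : ∀ f ∈ Finset.univ.filter (fun f : Fin m → Fin n => Function.Injective f),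
      Finset.image f Finset.univ ∈ Finset.powersetCard m (Finset.univ : Finset (Fin n)) := by
    intro f hf
    rw [Finset.mem_powersetCard_univ, Finset.card_image_of_injective _
      (Finset.mem_filter.mp hf).2]
    simp
  rw [← Finset.sum_fiberwise_of_maps_to hmaps]
  refine Finset.sum_congr rfl fun S hS => ?_
  rw [TS, Finset.mul_sum]
  rw [Finset.filter_filter]
  refine Finset.sum_congr rfl fun f hf => ?_
  obtain ⟨-, hfinj, hfim⟩ := Finset.mem_filter.mp hf
  have : ∏ k ∈ S, c k = ∏ i, c (f i) := by
    rw [← hfim, Finset.prod_image (fun a _ b _ h => hfinj h)]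
  rw [this]

private lemma TS_nonneg (A : Matrix (Fin m) (Fin n) ℝ) {S : Finset (Fin n)}
    (hS : S ∈ Finset.powersetCard m (Finset.univ : Finset (Fin n))) : 0 ≤ TS A S := by
  have h := Gw_det_nonneg A (c := fun k => if k ∈ S then (1 : ℝ) else 0)
    (fun k => by positivity)
  rw [Gw_det_eq_sum] at h
  rw [Finset.sum_eq_single_of_mem S hS] at h
  · have h1 : (∏ k ∈ S, if k ∈ S then (1 : ℝ) else 0) = 1 := by
      rw [Finset.prod_congr rfl (fun k hk => if_pos hk)]
      exact Finset.prod_const_one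
    rwa [h1, one_mul] at h
  · intro S' hS' hne
    have hcard : S'.card = m := Finset.mem_powersetCard_univ.mp hS'
    have hcardS : S.card = m := Finset.mem_powersetCard_univ.mp hS
    have : ¬ S' ⊆ S := by
      intro hsub
      exact hne (Finset.eq_of_subset_of_card_le hsub (by rw [hcard, hcardS]))
    obtain ⟨k, hk, hk'⟩ := Finset.not_subset.mp this
    rw [Finset.prod_eq_zero hk (by simp [hk']), zero_mul]

/-- product over a subset of size m of an antitone nonneg family is at most the
product over the first m indices. -/
private lemma prod_subset_le (hmn : m ≤ n) {d : Fin n → ℝ} (hd0 : ∀ k, 0 ≤ d k)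
    (hda : Antitone d) {S : Finset (Fin n)} (hcard : S.card = m) :
    ∏ k ∈ S, d k ≤ ∏ i : Fin m, d (Fin.castLE hmn i) := by
  have e : Fin m ≃o S := S.orderIsoOfFin hcard
  have hle : ∀ i : Fin m, (i : ℕ) ≤ ((e i : Fin n) : ℕ) := by
    have mono : StrictMono (fun i : Fin m => ((e i : Fin n) : ℕ)) := by
      intro a b hab
      exact_mod_cast Subtype.coe_lt_coe.mpr (e.strictMono hab)
    intro i
    obtain ⟨j, hj⟩ := i
    induction j with
    | zero => exact Nat.zero_le _
    | succ k ih =>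
      have hk : k < m := Nat.lt_of_succ_lt hj
      have h1 : ((e ⟨k, hk⟩ : Fin n) : ℕ) < ((e ⟨k + 1, hj⟩ : Fin n) : ℕ) :=
        mono (by simp [Fin.lt_def])
      have h2 : k ≤ ((e ⟨k, hk⟩ : Fin n) : ℕ) := ih hk
      show k + 1 ≤ ((e ⟨k + 1, hj⟩ : Fin n) : ℕ)
      omega
  calc ∏ k ∈ S, d k = ∏ i : Fin m, d (e i : Fin n) := by
        rw [← Finset.prod_coe_sort S d]
        exact (Fintype.prod_equiv e.toEquiv _ _ (fun i => rfl)).symm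
    _ ≤ ∏ i : Fin m, d (Fin.castLE hmn i) := by
        refine Finset.prod_le_prod (fun i _ => hd0 _) (fun i _ => ?_)
        refine hda ?_
        rw [Fin.le_def]
        simpa using hle i

private lemma Gw_main_ineq (A : Matrix (Fin m) (Fin n) ℝ) (hmn : m ≤ n) {d : Fin n → ℝ}
    (hd0 : ∀ k, 0 ≤ d k) (hda : Antitone d) :
    (Gw A d).det ≤ (∏ i : Fin m, d (Fin.castLE hmn i)) * (Gw A (fun _ => 1)).det := by
  rw [Gw_det_eq_sum, Gw_det_eq_sum, Finset.mul_sum]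
  refine Finset.sum_le_sum fun S hS => ?_
  have hcard : S.card = m := Finset.mem_powersetCard_univ.mp hS
  have h1 : (∏ k ∈ S, (1 : ℝ)) = 1 := Finset.prod_const_one
  rw [h1, one_mul]
  exact mul_le_mul_of_nonneg_right (prod_subset_le hmn hd0 hda hcard) (TS_nonneg A hS)

end Aux

/-- The operator norm of the `m`-th exterior power of a linear map `L` between
finite-dimensional inner product spaces — i.e. the supremum (here: greatest value) of the
`m`-volume `|Lw_1 ∧ ⋯ ∧ Lw_m|` over decomposable unit `m`-volumes `|w_1 ∧ ⋯ ∧ w_m| = 1`,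
where volumes are computed by Gram determinants — equals the product `α_1(L)⋯α_m(L)` of the
`m` largest singular values of `L` (given as the antitone family of nonnegative `σ i` with an
orthonormal eigenbasis of `L*L` for the eigenvalues `σ i ^ 2`). -/
theorem norm_exterior_power_eq_prod_singular_values
    {E F : Type*} [NormedAddCommGroup E] [InnerProductSpace ℝ E] [FiniteDimensional ℝ E]
    [NormedAddCommGroup F] [InnerProductSpace ℝ F] [FiniteDimensional ℝ F]
    {n m : ℕ} (hn : Module.finrank ℝ E = n) (hm : 1 ≤ m) (hmn : m ≤ n)
    (L : E →ₗ[ℝ] F)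
    (σ : Fin n → ℝ) (hσa : Antitone σ) (hσ0 : ∀ i, 0 ≤ σ i)
    (v : Fin n → E) (hv : Orthonormal ℝ v)
    (heig : ∀ i, LinearMap.adjoint L (L (v i)) = σ i ^ 2 • v i) :
    IsGreatest
      {r : ℝ | ∃ w : Fin m → E,
        Real.sqrt (Matrix.det (Matrix.of fun i j : Fin m => (inner ℝ (w i) (w j) : ℝ))) = 1 ∧
        r = Real.sqrt
          (Matrix.det (Matrix.of fun i j : Fin m => (inner ℝ (L (w i)) (L (w j)) : ℝ)))}
      (∏ i : Fin m, σ (Fin.castLE hmn i)) := by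
  have hvite : ∀ a b, ⟪v a, v b⟫ = if a = b then (1:ℝ) else 0 := orthonormal_iff_ite.mp hv
  have hLL : ∀ x y, ⟪L x, L y⟫ = ⟪LinearMap.adjoint L (L x), y⟫ := fun x y =>
    (LinearMap.adjoint_inner_left L y (L x)).symm
  constructor
  · -- membership: take w = v ∘ castLE
    refine ⟨fun i => v (Fin.castLE hmn i), ?_, ?_⟩
    · have : (Matrix.of fun i j : Fin m => ⟪v (Fin.castLE hmn i), v (Fin.castLE hmn j)⟫) =
          (1 : Matrix (Fin m) (Fin m) ℝ) := by
        ext i j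
        rw [Matrix.of_apply, hvite, Matrix.one_apply]
        simp [Fin.castLE_inj]
      rw [this, Matrix.det_one, Real.sqrt_one]
    · have : (Matrix.of fun i j : Fin m => ⟪L (v (Fin.castLE hmn i)), L (v (Fin.castLE hmn j))⟫)
          = Matrix.diagonal (fun i : Fin m => σ (Fin.castLE hmn i) ^ 2) := by
        ext i j
        rw [Matrix.of_apply, hLL, heig, real_inner_smul_left, hvite, Matrix.diagonal_apply]
        by_cases h : i = j <;> simp [h, Fin.castLE_inj]
      rw [this, Matrix.det_diagonal, Finset.prod_pow]
      rw [Real.sqrt_sq (Finset.prod_nonneg fun i _ => hσ0 _)]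
  · -- upper bound
    rintro r ⟨w, hw1, rfl⟩
    -- orthonormal basis from v
    haveI : Nonempty (Fin n) := ⟨⟨0, lt_of_lt_of_le hm hmn⟩⟩
    have hcard : Fintype.card (Fin n) = Module.finrank ℝ E := by simp [hn]
    let bas := basisOfLinearIndependentOfCardEqFinrank hv.linearIndependent hcard
    have hbas : ⇑bas = v := coe_basisOfLinearIndependentOfCardEqFinrank _ _
    let b : OrthonormalBasis (Fin n) ℝ E := bas.toOrthonormalBasis (by rwa [hbas])
    have hb : ⇑b = v := by
      rw [show ⇑b = ⇑bas from Module.Basis.coe_toOrthonormalBasis bas _, hbas]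
    set A : Matrix (Fin m) (Fin n) ℝ := Matrix.of fun i k => ⟪w i, v k⟫ with hA
    -- Gram(w) = Gw A 1
    have hGram1 : (Matrix.of fun i j : Fin m => ⟪w i, w j⟫) = Gw A (fun _ => 1) := by
      ext i j
      rw [Matrix.of_apply, ← b.sum_inner_mul_inner (w i) (w j)]
      simp only [Gw, Matrix.of_apply, hA, hb]
      refine Finset.sum_congr rfl fun k _ => ?_
      rw [real_inner_comm (v k) (w j)]
      ring
    -- Gram(Lw) = Gw A (σ^2)
    have hGram2 : (Matrix.of fun i j : Fin m => ⟪L (w i), L (w j)⟫) =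
        Gw A (fun k => σ k ^ 2) := by
      ext i j
      rw [Matrix.of_apply, hLL, ← b.sum_inner_mul_inner (LinearMap.adjoint L (L (w i))) (w j)]
      simp only [Gw, Matrix.of_apply, hA, hb]
      refine Finset.sum_congr rfl fun k _ => ?_
      have h1 : ⟪LinearMap.adjoint L (L (w i)), v k⟫ = σ k ^ 2 * ⟪w i, v k⟫ := by
        rw [LinearMap.adjoint_inner_left, real_inner_comm, hLL, heig, real_inner_smul_left,
          real_inner_comm]
      rw [h1, real_inner_comm (v k) (w j)]
      ring
    have hd0 : ∀ k, (0:ℝ) ≤ σ k ^ 2 := fun k => sq_nonneg _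
    have hda : Antitone (fun k => σ k ^ 2) := fun a c hac =>
      pow_le_pow_left₀ (hσ0 c) (hσa hac) 2
    have hdet1 : (Gw A (fun _ => (1:ℝ))).det = 1 := by
      rw [hGram1] at hw1
      have h0 : 0 ≤ (Gw A (fun _ => (1:ℝ))).det := Gw_det_nonneg A (fun _ => zero_le_one)
      exact Real.sqrt_eq_one.mp hw1
    have hineq := Gw_main_ineq A hmn hd0 hda
    rw [hdet1, mul_one] at hineq
    rw [hGram2]
    calc Real.sqrt (Gw A (fun k => σ k ^ 2)).det
        ≤ Real.sqrt (∏ i : Fin m, σ (Fin.castLE hmn i) ^ 2) := Real.sqrt_le_sqrt hineq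
      _ = ∏ i : Fin m, σ (Fin.castLE hmn i) := by
          rw [Finset.prod_pow, Real.sqrt_sq (Finset.prod_nonneg fun i _ => hσ0 _)]
end

section
/- For d = m + s with integer m ≥ 0 and s ∈ (0,1], define the singular value function ω_d(L) = α_1(L)⋯α_m(L)·α_{m+1}(L)^s (with ω_0 := 1). Then ω_d is submultiplicative: ω_d(L_2 L_1) ≤ ω_d(L_1)·ω_d(L_2) for composable linear maps L_1, L_2 between finite-dimensional inner product spaces. -/
open Matrix Finset in
theorem my_det_mul_expand {k p : ℕ} {R : Type*} [CommRing R]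
    (A : Matrix (Fin k) (Fin p) R) (B : Matrix (Fin p) (Fin k) R) :
    (A * B).det = ∑ φ : Fin k → Fin p, (∏ i, A i (φ i)) * (B.submatrix φ id).det := by
  have h1 : (A * B).det
      = (Matrix.detRowAlternating (R := R) (n := Fin k)).toMultilinearMap
        (fun i => ∑ j, A i j • B j) := by
    congr 1
    ext i j'
    simp [Matrix.mul_apply, Finset.sum_apply]
  rw [h1, MultilinearMap.map_sum]
  refine Finset.sum_congr rfl fun φ _ => ?_
  rw [MultilinearMap.map_smul_univ]
  rw [smul_eq_mul]
  congr 1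


open Matrix Finset in
theorem my_cauchy_binet {k p : ℕ} {R : Type*} [CommRing R]
    (A : Matrix (Fin k) (Fin p) R) (B : Matrix (Fin p) (Fin k) R) :
    (A * B).det = ∑ f : Fin k → Fin p with StrictMono f,
      (A.submatrix id f).det * (B.submatrix f id).det := by
  classical
  rw [my_det_mul_expand]
  rw [← Finset.sum_filter_of_ne
    (p := fun φ : Fin k → Fin p => Function.Injective φ)
    (fun φ _ hne => by
      by_contra hni
      apply hne
      obtain ⟨i, j, hij, hne'⟩ : ∃ i j, φ i = φ j ∧ i ≠ j := by
        simpa [Function.Injective] using hni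
      rw [Matrix.det_zero_of_row_eq hne' (by ext l; simp [hij]), mul_zero])]
  have step2 : (∑ f : Fin k → Fin p with StrictMono f,
        (A.submatrix id f).det * (B.submatrix f id).det)
      = ∑ x ∈ (Finset.univ.filter (fun f : Fin k → Fin p => StrictMono f)) ×ˢ
          (Finset.univ : Finset (Equiv.Perm (Fin k))),
          ((Equiv.Perm.sign x.2 : ℤ) : R) * ((∏ i, A i (x.1 (x.2 i))) * (B.submatrix x.1 id).det) := by
    rw [Finset.sum_product]
    refine Finset.sum_congr rfl fun f hf => ?_
    simp only
    have : ∀ y : Equiv.Perm (Fin k),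
        ((Equiv.Perm.sign y : ℤ) : R) * ((∏ i, A i (f (y i))) * (B.submatrix f id).det)
        = (((Equiv.Perm.sign y : ℤ) : R) * ∏ i, A i (f (y i))) * (B.submatrix f id).det := by
      intro y; ring
    simp only [this]
    rw [← Finset.sum_mul]
    congr 1
    rw [← Matrix.det_transpose (A.submatrix id f), Matrix.det_apply]
    refine Finset.sum_congr rfl fun σ _ => ?_
    simp [Matrix.transpose_apply, Matrix.submatrix_apply, Units.smul_def, zsmul_eq_mul]
  rw [step2]
  refine Finset.sum_nbij' (i := fun φ => (φ ∘ Tuple.sort φ, (Tuple.sort φ)⁻¹))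
    (j := fun x => x.1 ∘ x.2) ?_ ?_ ?_ ?_ ?_
  · intro φ hφ
    simp only [Finset.mem_filter, Finset.mem_univ, true_and] at hφ ⊢
    rw [Finset.mem_product]
    refine ⟨?_, Finset.mem_univ _⟩
    simp only [Finset.mem_filter, Finset.mem_univ, true_and]
    exact (Tuple.monotone_sort φ).strictMono_of_injective
      (hφ.comp (Tuple.sort φ).injective)
  · intro x hx
    rw [Finset.mem_product] at hx
    obtain ⟨hx1, -⟩ := hx
    simp only [Finset.mem_filter, Finset.mem_univ, true_and] at hx1 ⊢
    exact hx1.injective.comp x.2.injective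
  · -- left inverse : j (i φ) = φ
    intro φ hφ
    show (φ ∘ ⇑(Tuple.sort φ)) ∘ ⇑((Tuple.sort φ)⁻¹) = φ
    ext i
    simp only [Function.comp_apply, Equiv.Perm.coe_inv, Equiv.apply_symm_apply]
  · -- right inverse : i (j x) = x
    intro x hx
    rw [Finset.mem_product] at hx
    obtain ⟨hx1, -⟩ := hx
    simp only [Finset.mem_filter, Finset.mem_univ, true_and] at hx1
    have hsort : Tuple.sort (x.1 ∘ x.2) = x.2⁻¹ := by
      have h1 : (x.1 ∘ x.2) ∘ Tuple.sort (x.1 ∘ x.2) = x.1 ∘ Tuple.sort x.1 :=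
        Tuple.comp_perm_comp_sort_eq_comp_sort
      rw [Tuple.sort_eq_refl_iff_monotone.2 hx1.monotone] at h1
      have h3 : ∀ i, x.2 ((Tuple.sort (x.1 ∘ x.2)) i) = i := fun i =>
        hx1.injective (congrFun h1 i)
      apply Equiv.ext; intro i
      apply x.2.injective
      simp [h3 i]
    show ((x.1 ∘ ⇑x.2) ∘ ⇑(Tuple.sort (x.1 ∘ ⇑x.2)), (Tuple.sort (x.1 ∘ ⇑x.2))⁻¹) = x
    rw [hsort, inv_inv]
    refine Prod.ext ?_ rfl
    ext i
    simp
  · -- value equality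
    intro φ hφ
    simp only [Finset.mem_filter, Finset.mem_univ, true_and] at hφ
    set σ := Tuple.sort φ with hσ
    show (∏ i, A i (φ i)) * (B.submatrix φ id).det
      = ((Equiv.Perm.sign σ⁻¹ : ℤ) : R) *
        ((∏ i, A i ((φ ∘ ⇑σ) (σ⁻¹ i))) * (B.submatrix (φ ∘ ⇑σ) id).det)
    have e1 : ∀ i : Fin k, (φ ∘ ⇑σ) (σ⁻¹ i) = φ i := by
      intro i; simp only [Function.comp_apply, Equiv.Perm.coe_inv, Equiv.apply_symm_apply]
    have e2 : B.submatrix (φ ∘ ⇑σ) id = (B.submatrix φ id).submatrix σ id := by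
      ext i j; simp
    rw [e2, Matrix.det_permute]
    simp only [e1, Equiv.Perm.sign_inv]
    have hs : ((Equiv.Perm.sign σ : ℤ) : R) ^ 2 = 1 := by
      rw [← Int.cast_pow, ← Units.val_pow_eq_pow_val, Int.units_sq]
      simp
    ring_nf
    rw [hs]
    ring

theorem svf_le_apply {k p : ℕ} {f : Fin k → Fin p} (hf : StrictMono f) (i : Fin k) :
    (i : ℕ) ≤ (f i : ℕ) := by
  have : ∀ t : ℕ, ∀ i : Fin k, (i : ℕ) = t → t ≤ (f i : ℕ) := by
    intro t
    induction t with
    | zero => intro i _; exact Nat.zero_le _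
    | succ t ih =>
      intro i hi
      have hlt : t < k := by omega
      have hji : (⟨t, hlt⟩ : Fin k) < i := by
        rw [Fin.lt_def]; simp [hi]
      have h1 : f ⟨t, hlt⟩ < f i := hf hji
      have h2 : t ≤ (f ⟨t, hlt⟩ : ℕ) := ih ⟨t, hlt⟩ rfl
      rw [Fin.lt_def] at h1
      omega
  exact this _ i rfl

open Matrix Finset in
theorem svf_det_PDPT_le {k p : ℕ} (P : Matrix (Fin k) (Fin p) ℝ) (d : Fin p → ℝ) (K : ℝ)
    (hK : ∀ f : Fin k → Fin p, StrictMono f → (∏ i, d (f i)) ≤ K) :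
    (P * Matrix.diagonal d * Pᵀ).det ≤ K * (P * Pᵀ).det := by
  classical
  have key : ∀ f : Fin k → Fin p,
      ((P * Matrix.diagonal d).submatrix id f).det
        = (Pᵀ.submatrix f id).det * ∏ i, d (f i) := by
    intro f
    have : (P * Matrix.diagonal d).submatrix id f
        = (P.submatrix id f) * Matrix.diagonal (fun i => d (f i)) := by
      ext i j
      simp [Matrix.mul_diagonal]
    rw [this, Matrix.det_mul, Matrix.det_diagonal, ← Matrix.det_transpose (P.submatrix id f),
      Matrix.transpose_submatrix]
  have e1 : (P * Matrix.diagonal d * Pᵀ).det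
      = ∑ f : Fin k → Fin p with StrictMono f,
          (∏ i, d (f i)) * (Pᵀ.submatrix f id).det ^ 2 := by
    rw [my_cauchy_binet]
    refine Finset.sum_congr rfl fun f _ => ?_
    rw [key f]; ring
  have e2 : (P * Pᵀ).det
      = ∑ f : Fin k → Fin p with StrictMono f, (Pᵀ.submatrix f id).det ^ 2 := by
    rw [my_cauchy_binet]
    refine Finset.sum_congr rfl fun f _ => ?_
    rw [← Matrix.det_transpose (P.submatrix id f), Matrix.transpose_submatrix]; ring
  rw [e1, e2, Finset.mul_sum]
  refine Finset.sum_le_sum fun f hf => ?_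
  simp only [Finset.mem_filter, Finset.mem_univ, true_and] at hf
  exact mul_le_mul_of_nonneg_right (hK f hf) (sq_nonneg _)

open scoped RealInnerProductSpace

open Matrix Finset in
theorem svf_gram_bound {F G : Type*}
    [NormedAddCommGroup F] [InnerProductSpace ℝ F] [FiniteDimensional ℝ F]
    [NormedAddCommGroup G] [InnerProductSpace ℝ G] [FiniteDimensional ℝ G]
    {p k : ℕ} (hp : Module.finrank ℝ F = p) (hkp : k ≤ p)
    (L : F →ₗ[ℝ] G) (b : Fin p → ℝ) (hb : Antitone b) (hb0 : ∀ i, 0 ≤ b i)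
    (w : Fin p → F) (hw : Orthonormal ℝ w)
    (hew : ∀ i, LinearMap.adjoint L (L (w i)) = b i ^ 2 • w i)
    (v : Fin k → F) :
    (Matrix.of fun i j => ⟪L (v i), L (v j)⟫).det
      ≤ (∏ i : Fin k, b (Fin.castLE hkp i) ^ 2) *
        (Matrix.of fun i j => ⟪v i, v j⟫).det := by
  classical
  have hspan : ⊤ ≤ Submodule.span ℝ (Set.range w) :=
    (hw.linearIndependent.span_eq_top_of_card_eq_finrank' (by simp [hp])).ge
  let W : OrthonormalBasis (Fin p) ℝ F := OrthonormalBasis.mk hw hspan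
  have hWw : ∀ l, W l = w l := fun l => by
    simp [W, OrthonormalBasis.coe_mk]
  set P : Matrix (Fin k) (Fin p) ℝ := Matrix.of (fun i l => ⟪w l, v i⟫) with hP
  have hv : ∀ i, v i = ∑ l, P i l • w l := by
    intro i
    conv_lhs => rw [← W.sum_repr' (v i)]
    refine Finset.sum_congr rfl fun l _ => ?_
    rw [hWw, hP]
    rfl
  have hinner : ∀ (x : F) (j : Fin k), ⟪x, v j⟫ = ∑ l, ⟪x, w l⟫ * P j l := by
    intro x j
    conv_lhs => rw [hv j]
    rw [inner_sum]
    refine Finset.sum_congr rfl fun l _ => ?_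
    rw [real_inner_smul_right]
    ring
  have hgram : (Matrix.of fun i j => ⟪v i, v j⟫) = P * Pᵀ := by
    ext i j
    rw [Matrix.mul_apply]
    simp only [Matrix.of_apply, Matrix.transpose_apply]
    rw [hinner (v i) j]
    refine Finset.sum_congr rfl fun l _ => ?_
    rw [real_inner_comm (w l) (v i)]
    rfl
  have hgramL : (Matrix.of fun i j => ⟪L (v i), L (v j)⟫)
      = P * Matrix.diagonal (fun l => b l ^ 2) * Pᵀ := by
    ext i j
    simp only [Matrix.of_apply]
    rw [← LinearMap.adjoint_inner_left]
    have hadj : LinearMap.adjoint L (L (v i)) = ∑ l, (P i l * b l ^ 2) • w l := by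
      conv_lhs => rw [hv i, map_sum, map_sum]
      refine Finset.sum_congr rfl fun l _ => ?_
      rw [LinearMap.map_smul, LinearMap.map_smul, hew l, smul_smul]
    rw [hadj, sum_inner, Matrix.mul_apply]
    refine Finset.sum_congr rfl fun l _ => ?_
    rw [real_inner_smul_left, Matrix.mul_diagonal, Matrix.transpose_apply]
    have h1 : ⟪w l, v j⟫ = P j l := rfl
    rw [h1]
  rw [hgram, hgramL]
  refine svf_det_PDPT_le P _ _ fun f hf => ?_
  refine Finset.prod_le_prod (fun i _ => sq_nonneg _) fun i _ => ?_
  have hle : Fin.castLE hkp i ≤ f i := by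
    rw [Fin.le_def]
    exact svf_le_apply hf i
  exact pow_le_pow_left₀ (hb0 _) (hb hle) 2

open Matrix Finset in
theorem svf_integer {E F G : Type*}
    [NormedAddCommGroup E] [InnerProductSpace ℝ E] [FiniteDimensional ℝ E]
    [NormedAddCommGroup F] [InnerProductSpace ℝ F] [FiniteDimensional ℝ F]
    [NormedAddCommGroup G] [InnerProductSpace ℝ G] [FiniteDimensional ℝ G]
    {n p k : ℕ} (hn : Module.finrank ℝ E = n) (hp : Module.finrank ℝ F = p)
    (hkn : k ≤ n) (hkp : k ≤ p)
    (L₁ : E →ₗ[ℝ] F) (L₂ : F →ₗ[ℝ] G)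
    (a : Fin n → ℝ) (ha : Antitone a) (ha0 : ∀ i, 0 ≤ a i)
    (u : Fin n → E) (hu : Orthonormal ℝ u)
    (heu : ∀ i, LinearMap.adjoint L₁ (L₁ (u i)) = a i ^ 2 • u i)
    (b : Fin p → ℝ) (hb : Antitone b) (hb0 : ∀ i, 0 ≤ b i)
    (w : Fin p → F) (hw : Orthonormal ℝ w)
    (hew : ∀ i, LinearMap.adjoint L₂ (L₂ (w i)) = b i ^ 2 • w i)
    (c : Fin n → ℝ) (hc0 : ∀ i, 0 ≤ c i)
    (z : Fin n → E) (hz : Orthonormal ℝ z)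
    (hez : ∀ i, LinearMap.adjoint (L₂ ∘ₗ L₁) ((L₂ ∘ₗ L₁) (z i)) = c i ^ 2 • z i) :
    ∏ i : Fin k, c (Fin.castLE hkn i) ≤
      (∏ i : Fin k, a (Fin.castLE hkn i)) * ∏ i : Fin k, b (Fin.castLE hkp i) := by
  classical
  have hz' := orthonormal_iff_ite.mp hz
  set T := L₂ ∘ₗ L₁ with hT
  set zz : Fin k → E := fun i => z (Fin.castLE hkn i) with hzz
  -- Gram matrix of T ∘ zz is diagonal with entries c i ^ 2
  have hgramT : (Matrix.of fun i j => ⟪T (zz i), T (zz j)⟫)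
      = Matrix.diagonal (fun i : Fin k => c (Fin.castLE hkn i) ^ 2) := by
    ext i j
    simp only [Matrix.of_apply]
    rw [← LinearMap.adjoint_inner_left, hez, real_inner_smul_left, hz']
    rcases eq_or_ne i j with h | h
    · subst h; simp [Matrix.diagonal]
    · have : Fin.castLE hkn i ≠ Fin.castLE hkn j := fun hcon =>
        h (Fin.castLE_injective hkn hcon)
      simp [Matrix.diagonal, this, h]
  -- Gram of zz is the identity
  have hgramZ : (Matrix.of fun i j => ⟪zz i, zz j⟫) = (1 : Matrix (Fin k) (Fin k) ℝ) := by
    ext i j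
    simp only [Matrix.of_apply]
    rw [hz']
    rcases eq_or_ne i j with h | h
    · subst h; simp [Matrix.one_apply]
    · have : Fin.castLE hkn i ≠ Fin.castLE hkn j := fun hcon =>
        h (Fin.castLE_injective hkn hcon)
      simp [Matrix.one_apply, this, h]
  have h2 := svf_gram_bound hp hkp L₂ b hb hb0 w hw hew (fun i => L₁ (zz i))
  have h3 := svf_gram_bound hn hkn L₁ a ha ha0 u hu heu zz
  rw [hgramZ, Matrix.det_one, mul_one] at h3
  have hTz : (Matrix.of fun i j => ⟪L₂ (L₁ (zz i)), L₂ (L₁ (zz j))⟫)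
      = (Matrix.of fun i j => ⟪T (zz i), T (zz j)⟫) := by
    ext i j
    simp [hT]
  rw [hTz, hgramT] at h2
  rw [Matrix.det_diagonal] at h2
  have hsq : (∏ i : Fin k, c (Fin.castLE hkn i)) ^ 2
      ≤ ((∏ i : Fin k, a (Fin.castLE hkn i)) * ∏ i : Fin k, b (Fin.castLE hkp i)) ^ 2 := by
    rw [← Finset.prod_pow] at *
    calc (∏ i : Fin k, c (Fin.castLE hkn i) ^ 2)
        ≤ (∏ i : Fin k, b (Fin.castLE hkp i) ^ 2) *
            (Matrix.of fun i j => ⟪L₁ (zz i), L₁ (zz j)⟫).det := h2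
      _ ≤ (∏ i : Fin k, b (Fin.castLE hkp i) ^ 2) *
            (∏ i : Fin k, a (Fin.castLE hkn i) ^ 2) :=
          mul_le_mul_of_nonneg_left h3 (Finset.prod_nonneg fun i _ => sq_nonneg _)
      _ = ((∏ i : Fin k, a (Fin.castLE hkn i)) * ∏ i : Fin k, b (Fin.castLE hkp i)) ^ 2 := by
          rw [mul_pow, ← Finset.prod_pow, ← Finset.prod_pow]; ring
  have hC0 : 0 ≤ ∏ i : Fin k, c (Fin.castLE hkn i) :=
    Finset.prod_nonneg fun i _ => hc0 _
  have hAB0 : 0 ≤ (∏ i : Fin k, a (Fin.castLE hkn i)) * ∏ i : Fin k, b (Fin.castLE hkp i) :=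
    mul_nonneg (Finset.prod_nonneg fun i _ => ha0 _) (Finset.prod_nonneg fun i _ => hb0 _)
  exact (pow_le_pow_iff_left₀ hC0 hAB0 two_ne_zero).mp hsq



/-- Submultiplicativity of the singular value function `ω_d` of order `d = m + s`,
`s ∈ (0,1]`: `ω_d(L₂ ∘ L₁) ≤ ω_d(L₁) · ω_d(L₂)`, where the singular values of each map are
given as antitone nonnegative families coming from orthonormal eigenbases of the
corresponding `L*L`. -/
theorem singular_value_function_submultiplicative
    {E F G : Type*}
    [NormedAddCommGroup E] [InnerProductSpace ℝ E] [FiniteDimensional ℝ E]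
    [NormedAddCommGroup F] [InnerProductSpace ℝ F] [FiniteDimensional ℝ F]
    [NormedAddCommGroup G] [InnerProductSpace ℝ G] [FiniteDimensional ℝ G]
    {n p m : ℕ} (hn : Module.finrank ℝ E = n) (hp : Module.finrank ℝ F = p)
    (hmn : m < n) (hmp : m < p)
    (s : ℝ) (hs0 : 0 < s) (hs1 : s ≤ 1)
    (L₁ : E →ₗ[ℝ] F) (L₂ : F →ₗ[ℝ] G)
    (a : Fin n → ℝ) (ha : Antitone a) (ha0 : ∀ i, 0 ≤ a i)
    (u : Fin n → E) (hu : Orthonormal ℝ u)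
    (heu : ∀ i, LinearMap.adjoint L₁ (L₁ (u i)) = a i ^ 2 • u i)
    (b : Fin p → ℝ) (hb : Antitone b) (hb0 : ∀ i, 0 ≤ b i)
    (w : Fin p → F) (hw : Orthonormal ℝ w)
    (hew : ∀ i, LinearMap.adjoint L₂ (L₂ (w i)) = b i ^ 2 • w i)
    (c : Fin n → ℝ) (hc : Antitone c) (hc0 : ∀ i, 0 ≤ c i)
    (z : Fin n → E) (hz : Orthonormal ℝ z)
    (hez : ∀ i, LinearMap.adjoint (L₂ ∘ₗ L₁) ((L₂ ∘ₗ L₁) (z i)) = c i ^ 2 • z i) :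
    (∏ i : Fin m, c (Fin.castLE hmn.le i)) * c ⟨m, hmn⟩ ^ s ≤
      ((∏ i : Fin m, a (Fin.castLE hmn.le i)) * a ⟨m, hmn⟩ ^ s) *
        ((∏ i : Fin m, b (Fin.castLE hmp.le i)) * b ⟨m, hmp⟩ ^ s) := by
  set A := ∏ i : Fin m, a (Fin.castLE hmn.le i) with hA
  set B := ∏ i : Fin m, b (Fin.castLE hmp.le i) with hB
  set C := ∏ i : Fin m, c (Fin.castLE hmn.le i) with hC
  set α := a ⟨m, hmn⟩ with hα
  set β := b ⟨m, hmp⟩ with hβ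
  set γ := c ⟨m, hmn⟩ with hγ
  have hA0 : 0 ≤ A := Finset.prod_nonneg fun i _ => ha0 _
  have hB0 : 0 ≤ B := Finset.prod_nonneg fun i _ => hb0 _
  have hC0 : 0 ≤ C := Finset.prod_nonneg fun i _ => hc0 _
  have hα0 : 0 ≤ α := ha0 _
  have hβ0 : 0 ≤ β := hb0 _
  have hγ0 : 0 ≤ γ := hc0 _
  have H1 : C ≤ A * B :=
    svf_integer hn hp hmn.le hmp.le L₁ L₂ a ha ha0 u hu heu b hb hb0 w hw hew c hc0 z hz hez
  have split : ∀ (q : ℕ) (hq : m < q) (d : Fin q → ℝ),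
      ∏ i : Fin (m + 1), d (Fin.castLE hq i)
        = (∏ i : Fin m, d (Fin.castLE hq.le i)) * d ⟨m, hq⟩ := by
    intro q hq d
    rw [Fin.prod_univ_castSucc]
    congr 1
  have H2 : C * γ ≤ (A * α) * (B * β) := by
    have := svf_integer hn hp (Nat.succ_le_of_lt hmn) (Nat.succ_le_of_lt hmp)
      L₁ L₂ a ha ha0 u hu heu b hb hb0 w hw hew c hc0 z hz hez
    rwa [split n hmn a, split p hmp b, split n hmn c] at this
  rcases eq_or_lt_of_le hC0 with hCz | hCpos
  · rw [← hCz, zero_mul]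
    exact mul_nonneg (mul_nonneg hA0 (Real.rpow_nonneg hα0 s))
      (mul_nonneg hB0 (Real.rpow_nonneg hβ0 s))
  · have hABpos : 0 < A * B := lt_of_lt_of_le hCpos H1
    have hApos : 0 < A := by
      rcases hA0.lt_or_eq with h | h
      · exact h
      · exfalso; rw [← h, zero_mul] at hABpos; exact lt_irrefl _ hABpos
    have hBpos : 0 < B := by
      rcases hB0.lt_or_eq with h | h
      · exact h
      · exfalso; rw [← h, mul_zero] at hABpos; exact lt_irrefl _ hABpos
    have key : C * γ ^ s = C ^ (1 - s) * (C * γ) ^ s := by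
      rw [Real.mul_rpow hC0 hγ0, ← mul_assoc, ← Real.rpow_add hCpos, sub_add_cancel,
        Real.rpow_one]
    rw [key]
    have step : C ^ (1 - s) * (C * γ) ^ s ≤ (A * B) ^ (1 - s) * ((A * α) * (B * β)) ^ s := by
      refine mul_le_mul ?_ ?_ (Real.rpow_nonneg (mul_nonneg hC0 hγ0) s)
        (Real.rpow_nonneg (mul_nonneg hA0 hB0) (1 - s))
      · exact Real.rpow_le_rpow hC0 H1 (by linarith)
      · exact Real.rpow_le_rpow (mul_nonneg hC0 hγ0) H2 hs0.le
    refine le_trans step (le_of_eq ?_)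
    rw [Real.mul_rpow hA0 hB0, Real.mul_rpow (mul_nonneg hA0 hα0) (mul_nonneg hB0 hβ0),
      Real.mul_rpow hA0 hα0, Real.mul_rpow hB0 hβ0]
    have eA : A ^ (1 - s) * A ^ s = A := by
      rw [← Real.rpow_add hApos, sub_add_cancel, Real.rpow_one]
    have eB : B ^ (1 - s) * B ^ s = B := by
      rw [← Real.rpow_add hBpos, sub_add_cancel, Real.rpow_one]
    calc A ^ (1 - s) * B ^ (1 - s) * (A ^ s * α ^ s * (B ^ s * β ^ s))
        = (A ^ (1 - s) * A ^ s) * (B ^ (1 - s) * B ^ s) * α ^ s * β ^ s := by ring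
      _ = A * B * α ^ s * β ^ s := by rw [eA, eB]
      _ = A * α ^ s * (B * β ^ s) := by ring
end
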